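/- Let n > 0 and let k ≥ 2 be an even integer. Set m = (2k+1)(n+1)/n, which is the unique exponent satisfying the balance m − 2k = 1 + m/(n+1) (in particular m > 2k, so all factors m − j, j = 0, …, 2k−1, are positive), and let A = [ ((2k+1)+n) · ∏_{j=0}^{2k−1} (m − j) ]^{−(n+1)/n} > 0. Then for each sign ε ∈ {−1, +1} the function Y(y) = ε·A·y^m satisfies (−1)^{k+1}·Y^{(2k)}(y) + (1/((2k+1)+n))·y·N_n(Y(y)) = 0 for all y > 0. Thus for even k the equation admits a pair of exact algebraically growing solutions as y → +∞, the amplitude A being determined by |A|^{−n/(n+1)} = (−1)^k·m(m−1)⋯(m−2k+1)·((2k+1)+n). -/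

import Mathlib

/-- The odd power nonlinearity `N_n(Y) = |Y|^{-n/(n+1)}·Y` (with `N_n(0) = 0`). -/
noncomputable def Nn (n Y : ℝ) : ℝ := |Y| ^ (-(n / (n + 1))) * Y

lemma iter_rpow (m c : ℝ) : ∀ N : ℕ, ∀ y : ℝ, 0 < y →
    iteratedDeriv N (fun t : ℝ => c * t ^ m) y
      = c * (∏ j ∈ Finset.range N, (m - (j : ℝ))) * y ^ (m - N) := by
  intro N
  induction N with
  | zero => intro y hy; simp
  | succ N ih =>
    intro y hy
    rw [iteratedDeriv_succ]
    have hev : iteratedDeriv N (fun t : ℝ => c * t ^ m)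
        =ᶠ[nhds y] fun t : ℝ => c * (∏ j ∈ Finset.range N, (m - (j : ℝ))) * t ^ (m - N) := by
      filter_upwards [isOpen_Ioi.mem_nhds (Set.mem_Ioi.mpr hy)] with t ht
      exact ih t ht
    rw [hev.deriv_eq]
    have hd : HasDerivAt (fun t : ℝ => c * (∏ j ∈ Finset.range N, (m - (j : ℝ))) * t ^ (m - N))
        (c * (∏ j ∈ Finset.range N, (m - (j : ℝ))) * ((m - N) * y ^ (m - N - 1))) y :=
      (Real.hasDerivAt_rpow_const (Or.inl hy.ne')).const_mul _
    rw [hd.deriv, Finset.prod_range_succ]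
    have he : m - (N : ℝ) - 1 = m - ((N : ℕ) + 1 : ℕ) := by push_cast; ring
    rw [← he]
    ring


/-- For `n > 0` and even `k ≥ 2`, with `m = (2k+1)(n+1)/n`
(the balance exponent, `m - 2k = 1 + m/(n+1)`, `m > 2k`, all factors `m - j`
positive) and `A = [((2k+1)+n)·∏_{j<2k}(m-j)]^{-(n+1)/n} > 0`, the functions
`Y(y) = ±A·y^m` solve `(-1)^{k+1} Y^{(2k)} + (1/((2k+1)+n))·y·N_n(Y) = 0` on
`(0, ∞)`, the amplitude satisfying
`|A|^{-n/(n+1)} = (-1)^k·m(m-1)⋯(m-2k+1)·((2k+1)+n)`. -/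
theorem stmt4 (n : ℝ) (hn : 0 < n) (k : ℕ) (hk : 2 ≤ k) (hke : Even k) :
    let m : ℝ := (2 * (k : ℝ) + 1) * (n + 1) / n
    let A : ℝ := ((2 * (k : ℝ) + 1 + n) * ∏ j ∈ Finset.range (2 * k), (m - (j : ℝ)))
      ^ (-((n + 1) / n))
    (m - 2 * (k : ℝ) = 1 + m / (n + 1)) ∧
    (2 * (k : ℝ) < m) ∧
    (∀ j ∈ Finset.range (2 * k), (0 : ℝ) < m - (j : ℝ)) ∧
    (0 < A) ∧
    (|A| ^ (-(n / (n + 1)))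
      = (-1 : ℝ) ^ k * (∏ j ∈ Finset.range (2 * k), (m - (j : ℝ)))
        * (2 * (k : ℝ) + 1 + n)) ∧
    (∀ ε : ℝ, ε = -1 ∨ ε = 1 → ∀ y : ℝ, 0 < y →
      (-1 : ℝ) ^ (k + 1) * iteratedDeriv (2 * k) (fun t : ℝ => ε * A * t ^ m) y
        + (1 / (2 * (k : ℝ) + 1 + n)) * y * Nn n (ε * A * y ^ m) = 0) := by

  intro m A
  have hn1 : (0:ℝ) < n + 1 := by linarith
  have hm : m = (2 * (k : ℝ) + 1) * (n + 1) / n := rfl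
  have hbal : m - 2 * (k : ℝ) = 1 + m / (n + 1) := by
    rw [hm]; field_simp; ring
  have hkpos : (0:ℝ) < (k:ℝ) := by
    have : 0 < k := by omega
    exact_mod_cast this
  have hlt : 2 * (k : ℝ) < m := by
    rw [hm, lt_div_iff₀ hn]; nlinarith
  have hj : ∀ j ∈ Finset.range (2 * k), (0 : ℝ) < m - (j : ℝ) := by
    intro j hjm
    have h1 : j < 2 * k := Finset.mem_range.mp hjm
    have h2 : (j : ℝ) < 2 * (k : ℝ) := by exact_mod_cast h1
    linarith
  set P : ℝ := ∏ j ∈ Finset.range (2 * k), (m - (j : ℝ)) with hPdef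
  set S : ℝ := 2 * (k : ℝ) + 1 + n with hSdef
  have hS : 0 < S := by positivity
  have hP : 0 < P := Finset.prod_pos hj
  have hSP : 0 < S * P := mul_pos hS hP
  have hA : A = (S * P) ^ (-((n + 1) / n)) := rfl
  have hApos : 0 < A := by rw [hA]; exact Real.rpow_pos_of_pos hSP _
  have hamp : A ^ (-(n / (n + 1))) = S * P := by
    rw [hA, ← Real.rpow_mul hSP.le]
    have : (-((n + 1) / n)) * (-(n / (n + 1))) = 1 := by field_simp
    rw [this, Real.rpow_one]
  refine ⟨hbal, hlt, hj, hApos, ?_, ?_⟩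
  · rw [abs_of_pos hApos, hamp, hke.neg_one_pow]; ring
  · intro ε hε y hy
    have hym : 0 < y ^ m := Real.rpow_pos_of_pos hy m
    have habs : |ε * A * y ^ m| = A * y ^ m := by
      rcases hε with rfl | rfl <;>
        · rw [abs_mul, abs_mul, abs_of_pos hApos, abs_of_pos hym]; simp
    have hNn : Nn n (ε * A * y ^ m) = ε * A * P * S * y ^ (m - 2 * (k:ℝ) - 1) := by
      rw [Nn, habs, Real.mul_rpow hApos.le hym.le, hamp, ← Real.rpow_mul hy.le]
      have hexp : m * (-(n / (n + 1))) + m = m - 2 * (k:ℝ) - 1 := by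
        have h1 : m / (n + 1) = m - 2 * (k:ℝ) - 1 := by linarith
        have h2 : m * (-(n / (n + 1))) + m = m / (n + 1) := by field_simp; ring
        rw [h2, h1]
      rw [← hexp, Real.rpow_add hy]
      ring
    rw [iter_rpow m (ε * A) (2 * k) y hy, hNn]
    have hc : ((2 * k : ℕ) : ℝ) = 2 * (k : ℝ) := by push_cast; ring
    rw [hc]
    have hyy : y ^ (m - 2 * (k:ℝ)) = y ^ (m - 2 * (k:ℝ) - 1) * y := by
      rw [← Real.rpow_add_one hy.ne']; ring_nf
    have hodd : (-1 : ℝ) ^ (k + 1) = -1 := (hke.add_one).neg_one_pow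
    rw [hodd, hyy]
    field_simp
    ring
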